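/- For each positive integer n, let μ_n be the pushforward of the uniform probability measure on the n-dimensional closed unit ball under the map x ↦ √(n+2) · x₁ (the rescaled first coordinate). Then the sequence of probability measures μ_n on ℝ converges weakly (in distribution) to the standard normal distribution N(0,1) as n → ∞. -/

import Mathlib

open Real Filter MeasureTheory

/-- The uniform probability measure on the `n`-dimensional closed unit ball:
Lebesgue measure restricted to the ball, normalized by the ball's volume. -/
noncomputable def uniformBall (n : ℕ) : Measure (EuclideanSpace ℝ (Fin n)) :=
  (volume (Metric.closedBall (0 : EuclideanSpace ℝ (Fin n)) 1))⁻¹ •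
    volume.restrict (Metric.closedBall (0 : EuclideanSpace ℝ (Fin n)) 1)

/-- `μ_n` (for positive `n`, here written `n+1`): the pushforward of the uniform
probability measure on the `(n+1)`-dimensional closed unit ball under the rescaled
first-coordinate map `x ↦ √(n+1+2) · x₁`. -/
noncomputable def rescaledCoordMeasure (n : ℕ) : Measure ℝ :=
  Measure.map
    (fun x : EuclideanSpace ℝ (Fin (n + 1)) => Real.sqrt (((n : ℝ) + 1) + 2) * x 0)
    (uniformBall (n + 1))

/-- The standard normal distribution `N(0,1)` on `ℝ`, given by its density
`e^{−z²/2}/√(2π)` with respect to Lebesgue measure. -/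
noncomputable def stdNormal : Measure ℝ :=
  volume.withDensity fun z => ENNReal.ofReal (Real.exp (-z ^ 2 / 2) / Real.sqrt (2 * π))

open Topology
open scoped NNReal ENNReal


lemma sliceVol (n : ℕ) (hn : 1 ≤ n) (c : ℝ) :
    volume {y : Fin n → ℝ | ∑ i, (y i)^2 ≤ c}
      = ENNReal.ofReal ((volume (Metric.closedBall (0 : EuclideanSpace ℝ (Fin n)) 1)).toReal
          * (max c 0) ^ ((n:ℝ)/2)) := by
  have hme := EuclideanSpace.volume_preserving_symm_measurableEquiv_toLp (Fin n)
  have hSm : MeasurableSet {y : Fin n → ℝ | ∑ i, (y i)^2 ≤ c} := by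
    apply measurableSet_le <;> fun_prop
  rw [← hme.measure_preimage hSm.nullMeasurableSet]
  have hVlt : volume (Metric.closedBall (0 : EuclideanSpace ℝ (Fin n)) 1) < ⊤ :=
    measure_closedBall_lt_top
  rcases le_or_gt 0 c with hc | hc
  · have hset : (MeasurableEquiv.toLp 2 (Fin n → ℝ)).symm ⁻¹' {y : Fin n → ℝ | ∑ i, (y i)^2 ≤ c}
        = Metric.closedBall (0 : EuclideanSpace ℝ (Fin n)) (Real.sqrt c) := by
      ext x
      simp only [Set.mem_preimage, Set.mem_setOf_eq, Metric.mem_closedBall, dist_zero_right,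
        EuclideanSpace.norm_eq]
      have : ∀ i, ‖x i‖ ^ 2 = x i ^ 2 := fun i => by rw [Real.norm_eq_abs, sq_abs]
      simp only [this]
      rw [show ((MeasurableEquiv.toLp 2 (Fin n → ℝ)).symm x : Fin n → ℝ) = fun i => x i from rfl]
      rw [← Real.sqrt_le_sqrt_iff (by positivity)]
    rw [hset, Measure.addHaar_closedBall' _ _ (Real.sqrt_nonneg c)]
    rw [finrank_euclideanSpace_fin, max_eq_left hc]
    rw [ENNReal.ofReal_mul' (by positivity), ENNReal.ofReal_toReal hVlt.ne]
    rw [mul_comm]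
    congr 1
    rw [Real.sqrt_eq_rpow, ← Real.rpow_natCast (c ^ ((1:ℝ)/2)) n, ← Real.rpow_mul hc]
    ring_nf
  · have hset : (MeasurableEquiv.toLp 2 (Fin n → ℝ)).symm ⁻¹' {y : Fin n → ℝ | ∑ i, (y i)^2 ≤ c}
        = ∅ := by
      ext x
      simp only [Set.mem_preimage, Set.mem_setOf_eq, Set.mem_empty_iff_false, iff_false, not_le]
      refine lt_of_lt_of_le hc ?_
      positivity
    rw [hset, max_eq_right hc.le, Real.zero_rpow (by positivity), mul_zero]
    simp

lemma marginal (n : ℕ) (hn : 1 ≤ n) :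
    Measure.map (fun x : EuclideanSpace ℝ (Fin (n+1)) => x 0)
      (volume.restrict (Metric.closedBall (0 : EuclideanSpace ℝ (Fin (n+1))) 1))
    = volume.withDensity (fun t => ENNReal.ofReal
        ((volume (Metric.closedBall (0 : EuclideanSpace ℝ (Fin n)) 1)).toReal
          * (max (1 - t^2) 0) ^ ((n:ℝ)/2))) := by
  have hd : Measurable (fun t : ℝ => ENNReal.ofReal
      ((volume (Metric.closedBall (0 : EuclideanSpace ℝ (Fin n)) 1)).toReal
        * (max (1 - t^2) 0) ^ ((n:ℝ)/2))) := by
    have hc : Continuous fun t : ℝ => (max (1 - t^2) 0) ^ ((n:ℝ)/2) :=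
      Continuous.rpow_const (by continuity) (fun x => Or.inr (by positivity))
    exact (continuous_const.mul hc).measurable.ennreal_ofReal
  ext A hA
  have hm0 : Measurable (fun x : EuclideanSpace ℝ (Fin (n+1)) => x 0) := (measurable_pi_apply 0).comp (WithLp.measurable_ofLp 2 _)
  rw [Measure.map_apply hm0 hA, Measure.restrict_apply (hA.preimage hm0), withDensity_apply _ hA]
  -- transfer to ℝ × (Fin n → ℝ)
  set e := (MeasurableEquiv.toLp 2 (Fin (n+1) → ℝ)).symm.trans
    (MeasurableEquiv.piFinSuccAbove (fun _ : Fin (n+1) => ℝ) 0) with he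
  have hmp : MeasurePreserving e volume volume :=
    (volume_preserving_piFinSuccAbove (fun _ : Fin (n+1) => ℝ) 0).comp
      (EuclideanSpace.volume_preserving_symm_measurableEquiv_toLp (Fin (n+1)))
  set C : Set (ℝ × (Fin n → ℝ)) := {p | p.1 ∈ A ∧ p.1^2 + ∑ i, (p.2 i)^2 ≤ 1} with hC
  have hCm : MeasurableSet C := by
    have h1 : MeasurableSet {p : ℝ × (Fin n → ℝ) | p.1 ∈ A} := measurable_fst hA
    have h2 : MeasurableSet {p : ℝ × (Fin n → ℝ) | p.1^2 + ∑ i, (p.2 i)^2 ≤ 1} :=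
      measurableSet_le (by fun_prop) measurable_const
    exact h1.inter h2
  have hpre : (fun x : EuclideanSpace ℝ (Fin (n+1)) => x 0) ⁻¹' A
      ∩ Metric.closedBall 0 1 = e ⁻¹' C := by
    ext x
    have hex : e x = (x 0, fun i => x (Fin.succ i)) := by
      simp only [he, MeasurableEquiv.trans_apply, MeasurableEquiv.piFinSuccAbove_apply,
        MeasurableEquiv.toLp_symm_apply]
      rfl
    simp only [Set.mem_inter_iff, Set.mem_preimage, Metric.mem_closedBall, dist_zero_right,
      EuclideanSpace.norm_eq, hC, Set.mem_setOf_eq, hex]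
    have h2 : ∀ i, ‖x i‖ ^ 2 = x i ^ 2 := fun i => by rw [Real.norm_eq_abs, sq_abs]
    simp only [h2]
    refine and_congr_right fun _ => ?_
    rw [← Real.sqrt_one, Real.sqrt_le_sqrt_iff (by positivity), Real.sqrt_one, Fin.sum_univ_succ]
  rw [hpre, hmp.measure_preimage hCm.nullMeasurableSet]
  rw [Measure.volume_eq_prod, Measure.prod_apply hCm]
  rw [← lintegral_indicator hA]
  congr 1
  ext t
  rcases em (t ∈ A) with ht | ht
  · rw [Set.indicator_of_mem ht]
    have : Prod.mk t ⁻¹' C = {y : Fin n → ℝ | ∑ i, (y i)^2 ≤ 1 - t^2} := by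
      ext y; simp [hC, ht]; constructor <;> intro h <;> linarith
    rw [this, sliceVol n hn (1 - t^2)]
  · rw [Set.indicator_of_notMem ht]
    have : Prod.mk t ⁻¹' C = ∅ := by
      ext y; simp [hC, ht]
    simp [this]


noncomputable def hdens (n : ℕ) (s : ℝ) : ℝ := (max (1 - s^2/((n:ℝ)+3)) 0) ^ ((n:ℝ)/2)

lemma hdens_nonneg (n : ℕ) (s : ℝ) : 0 ≤ hdens n s :=
  Real.rpow_nonneg (le_max_right _ 0) _

lemma hdens_continuous (n : ℕ) : Continuous (hdens n) :=
  Continuous.rpow_const (by continuity) (fun x => Or.inr (by positivity))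

lemma hdens_tendsto (s : ℝ) :
    Tendsto (fun n : ℕ => hdens n s) atTop (𝓝 (Real.exp (-s^2/2))) := by
  have hx : Tendsto (fun n : ℕ => (n:ℝ)+3) atTop atTop :=
    tendsto_atTop_add_const_right _ 3 tendsto_natCast_atTop_atTop
  have hA : Tendsto (fun n : ℕ => ((n:ℝ)+3) * Real.log (1 + (-s^2)/((n:ℝ)+3)))
      atTop (𝓝 (-s^2)) := (Real.tendsto_mul_log_one_add_div_atTop (-s^2)).comp hx
  have hB : Tendsto (fun n : ℕ => ((n:ℝ)/2)/((n:ℝ)+3)) atTop (𝓝 (1/2)) := by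
    have h1 : Tendsto (fun n : ℕ => (1 - 3/((n:ℝ)+3))/2) atTop (𝓝 ((1 - 0)/2)) :=
      ((tendsto_const_nhds.sub (tendsto_const_nhds.div_atTop hx)).div_const 2)
    have h2 : ∀ n : ℕ, (1 - 3/((n:ℝ)+3))/2 = ((n:ℝ)/2)/((n:ℝ)+3) := by
      intro n
      have : ((n:ℝ)+3) ≠ 0 := by positivity
      field_simp
      try ring
      try exact Or.inl trivial
    simp only [h2] at h1
    norm_num at h1
    exact h1
  have hC : Tendsto (fun n : ℕ => ((n:ℝ)/2) * Real.log (1 + (-s^2)/((n:ℝ)+3)))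
      atTop (𝓝 (-s^2/2)) := by
    have := hB.mul hA
    have heq : ∀ n : ℕ, ((n:ℝ)/2)/((n:ℝ)+3) * (((n:ℝ)+3) * Real.log (1 + (-s^2)/((n:ℝ)+3)))
        = ((n:ℝ)/2) * Real.log (1 + (-s^2)/((n:ℝ)+3)) := by
      intro n
      have h3 : ((n:ℝ)+3) ≠ 0 := by positivity
      field_simp
      try ring
    simp only [heq] at this
    convert this using 2
    ring
  have hE := (Real.continuous_exp.tendsto _).comp hC
  apply Tendsto.congr' _ hE
  filter_upwards [eventually_ge_atTop ⌈s^2⌉₊] with n hn'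
  have hlt : s^2 < (n:ℝ)+3 := by
    have h1 : s^2 ≤ (⌈s^2⌉₊ : ℝ) := Nat.le_ceil _
    have h2 : ((⌈s^2⌉₊ : ℕ) : ℝ) ≤ (n:ℝ) := by exact_mod_cast hn'
    linarith
  have hb : 0 < 1 - s^2/((n:ℝ)+3) := by
    rw [sub_pos]
    exact (div_lt_one (by positivity)).mpr hlt
  show Real.exp _ = hdens n s
  rw [hdens, max_eq_left hb.le, Real.rpow_def_of_pos hb]
  rw [show 1 - s^2/((n:ℝ)+3) = 1 + (-s^2)/((n:ℝ)+3) by ring, mul_comm]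

lemma hdens_le (n : ℕ) (hn : 1 ≤ n) (s : ℝ) : hdens n s ≤ Real.exp (-(1/8) * s^2) := by
  rcases le_or_gt (1 - s^2/((n:ℝ)+3)) 0 with hb | hb
  · have hne : ((n:ℝ)/2) ≠ 0 := by
      have : (1:ℝ) ≤ (n:ℝ) := by exact_mod_cast hn
      positivity
    rw [hdens, max_eq_right hb, Real.zero_rpow hne]
    exact (Real.exp_pos _).le
  · have hd : (0:ℝ) < (n:ℝ)+3 := by positivity
    have h1 : 1 - s^2/((n:ℝ)+3) ≤ Real.exp (-s^2/((n:ℝ)+3)) := by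
      have := Real.add_one_le_exp (-s^2/((n:ℝ)+3))
      have h2 : -s^2/((n:ℝ)+3) = -(s^2/((n:ℝ)+3)) := by ring
      linarith
    calc hdens n s = (1 - s^2/((n:ℝ)+3)) ^ ((n:ℝ)/2) := by rw [hdens, max_eq_left hb.le]
    _ ≤ (Real.exp (-s^2/((n:ℝ)+3))) ^ ((n:ℝ)/2) :=
        Real.rpow_le_rpow hb.le h1 (by positivity)
    _ = Real.exp ((-s^2/((n:ℝ)+3)) * ((n:ℝ)/2)) := by
        rw [Real.rpow_def_of_pos (Real.exp_pos _), Real.log_exp]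
    _ ≤ Real.exp (-(1/8) * s^2) := by
        apply Real.exp_le_exp.mpr
        have h3 : (-s^2/((n:ℝ)+3)) * ((n:ℝ)/2) = (-s^2 * (n:ℝ)) / (((n:ℝ)+3)*2) := by
          field_simp
          try ring
        rw [h3, show -(1/8) * s^2 = (-s^2)/8 by ring, div_le_div_iff₀ (by positivity) (by norm_num)]
        have hn' : (1:ℝ) ≤ (n:ℝ) := by exact_mod_cast hn
        nlinarith [sq_nonneg s]

section
variable (n : ℕ)

noncomputable def Kc (n : ℕ) : ℝ :=
  (volume (Metric.closedBall (0 : EuclideanSpace ℝ (Fin (n+1))) 1)).toReal⁻¹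
    * (Real.sqrt (((n:ℝ)+1)+2))⁻¹
    * (volume (Metric.closedBall (0 : EuclideanSpace ℝ (Fin n)) 1)).toReal

lemma integral_rescaled (hn : 1 ≤ n) (ψ : ℝ → ℝ) (hψ : Continuous ψ) :
    ∫ z, ψ z ∂(rescaledCoordMeasure n) = Kc n * ∫ s, hdens n s * ψ s := by
  set a : ℝ := Real.sqrt (((n:ℝ)+1)+2) with haa
  have ha : 0 < a := Real.sqrt_pos.mpr (by positivity)
  have ha2 : a^2 = (n:ℝ)+3 := by
    rw [haa, Real.sq_sqrt (by positivity)]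
    ring
  have hm0 : Measurable (fun x : EuclideanSpace ℝ (Fin (n+1)) => x 0) := (measurable_pi_apply 0).comp (WithLp.measurable_ofLp 2 _)
  have hf : Measurable (fun x : EuclideanSpace ℝ (Fin (n+1)) => a * x 0) := hm0.const_mul a
  rw [rescaledCoordMeasure, uniformBall]
  rw [Measure.map_smul]
  rw [integral_smul_measure]
  rw [integral_map hf.aemeasurable hψ.aestronglyMeasurable]
  have hg : Continuous (fun t : ℝ => ψ (a * t)) := hψ.comp (continuous_const.mul continuous_id)
  have step1 : ∫ x, ψ (a * x 0)
        ∂(volume.restrict (Metric.closedBall (0 : EuclideanSpace ℝ (Fin (n+1))) 1))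
      = ∫ t, ψ (a * t) ∂(Measure.map (fun x : EuclideanSpace ℝ (Fin (n+1)) => x 0)
        (volume.restrict (Metric.closedBall 0 1))) := by
    exact (integral_map (f := fun t : ℝ => ψ (a * t)) hm0.aemeasurable
      hg.aestronglyMeasurable).symm
  rw [step1, marginal n hn]
  set V : ℝ := (volume (Metric.closedBall (0 : EuclideanSpace ℝ (Fin n)) 1)).toReal with hV
  have hVnn : 0 ≤ V := ENNReal.toReal_nonneg
  set w : ℝ → ℝ := fun t => V * (max (1 - t^2) 0) ^ ((n:ℝ)/2) with hw
  have hwnn : ∀ t, 0 ≤ w t := fun t => by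
    apply mul_nonneg hVnn (Real.rpow_nonneg (le_max_right _ 0) _)
  have hwc : Continuous w :=
    continuous_const.mul (Continuous.rpow_const (by continuity) (fun x => Or.inr (by positivity)))
  have hdd : (volume.withDensity fun t => ENNReal.ofReal (w t))
      = volume.withDensity (fun t => ((Real.toNNReal (w t) : NNReal) : ENNReal)) := rfl
  rw [hdd, integral_withDensity_eq_integral_smul (hwc.measurable.real_toNNReal)]
  have step2 : ∀ t : ℝ, (w t).toNNReal • ψ (a * t) = w t * ψ (a * t) := by
    intro t
    rw [NNReal.smul_def, Real.coe_toNNReal _ (hwnn t), smul_eq_mul]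
  simp only [step2]
  have step3 : ∀ t : ℝ, w t * ψ (a * t) = (fun s => V * hdens n s * ψ s) (a * t) := by
    intro t
    simp only [hw, hdens]
    congr 3
    rw [mul_pow, ha2]
    field_simp
  simp only [step3]
  rw [Measure.integral_comp_mul_left (fun s => V * hdens n s * ψ s) a]
  rw [abs_of_pos (inv_pos.mpr ha)]
  simp only [smul_eq_mul, mul_assoc]
  rw [integral_const_mul]
  rw [Kc]
  have : (volume (Metric.closedBall (0 : EuclideanSpace ℝ (Fin (n+1))) 1))⁻¹.toReal
      = (volume (Metric.closedBall (0 : EuclideanSpace ℝ (Fin (n+1))) 1)).toReal⁻¹ :=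
    ENNReal.toReal_inv _
  rw [this, hV]
  have hmulps : ∀ y : ℝ, hdens n y * ψ y = (fun s => hdens n s * ψ s) y := fun _ => rfl
  ring

end

lemma rescaled_univ (n : ℕ) : rescaledCoordMeasure n Set.univ = 1 := by
  have hm0 : Measurable (fun x : EuclideanSpace ℝ (Fin (n+1)) => x 0) := (measurable_pi_apply 0).comp (WithLp.measurable_ofLp 2 _)
  have hf : Measurable (fun x : EuclideanSpace ℝ (Fin (n+1)) =>
      Real.sqrt (((n:ℝ)+1)+2) * x 0) := hm0.const_mul _
  rw [rescaledCoordMeasure, Measure.map_apply hf MeasurableSet.univ, Set.preimage_univ,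
    uniformBall, Measure.smul_apply, Measure.restrict_apply MeasurableSet.univ, Set.univ_inter,
    smul_eq_mul]
  exact ENNReal.inv_mul_cancel (Metric.measure_closedBall_pos volume _ one_pos).ne'
    measure_closedBall_lt_top.ne

lemma Kc_mul (n : ℕ) (hn : 1 ≤ n) : Kc n * ∫ s, hdens n s = 1 := by
  have h := integral_rescaled n hn (fun _ => 1) continuous_const
  simp only [mul_one] at h
  rw [← h, integral_const, measureReal_def, rescaled_univ n]
  simp

lemma gauss_int : ∫ s : ℝ, Real.exp (-s^2/2) = Real.sqrt (2*π) := by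
  have h := integral_gaussian (1/2)
  rw [show (fun x : ℝ => Real.exp (-(1/2) * x^2)) = fun x : ℝ => Real.exp (-x^2/2) by
    funext x; ring_nf] at h
  rw [h]
  congr 1
  rw [div_div_eq_mul_div]
  ring

lemma tendsto_I : Tendsto (fun n : ℕ => ∫ s, hdens n s) atTop (𝓝 (Real.sqrt (2*π))) := by
  rw [← gauss_int]
  apply tendsto_integral_filter_of_dominated_convergence (fun s => Real.exp (-(1/8) * s^2))
  · exact Eventually.of_forall fun n => (hdens_continuous n).aestronglyMeasurable
  · filter_upwards [eventually_ge_atTop 1] with n hn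
    refine Eventually.of_forall fun s => ?_
    rw [Real.norm_eq_abs, abs_of_nonneg (hdens_nonneg n s)]
    exact hdens_le n hn s
  · exact integrable_exp_neg_mul_sq (by norm_num)
  · exact Eventually.of_forall fun s => hdens_tendsto s

lemma tendsto_J (φ : BoundedContinuousFunction ℝ ℝ) :
    Tendsto (fun n : ℕ => ∫ s, hdens n s * φ s) atTop
      (𝓝 (∫ s, Real.exp (-s^2/2) * φ s)) := by
  apply tendsto_integral_filter_of_dominated_convergence
    (fun s => Real.exp (-(1/8) * s^2) * ‖φ‖)
  · exact Eventually.of_forall fun n =>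
      ((hdens_continuous n).mul φ.continuous).aestronglyMeasurable
  · filter_upwards [eventually_ge_atTop 1] with n hn
    refine Eventually.of_forall fun s => ?_
    rw [Real.norm_eq_abs, abs_mul, abs_of_nonneg (hdens_nonneg n s)]
    exact mul_le_mul (hdens_le n hn s) (φ.norm_coe_le_norm s) (abs_nonneg _)
      (Real.exp_pos _).le
  · exact (integrable_exp_neg_mul_sq (by norm_num)).mul_const _
  · exact Eventually.of_forall fun s => (hdens_tendsto s).mul tendsto_const_nhds

lemma stdNormal_int (φ : BoundedContinuousFunction ℝ ℝ) :
    ∫ z, φ z ∂stdNormal = (∫ s, Real.exp (-s^2/2) * φ s) / Real.sqrt (2*π) := by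
  have hgc : Continuous fun z : ℝ => Real.exp (-z^2/2) / Real.sqrt (2*π) := by continuity
  have hnn : ∀ z : ℝ, 0 ≤ Real.exp (-z^2/2) / Real.sqrt (2*π) := fun z => by positivity
  have hdd : stdNormal = volume.withDensity
      (fun z => ((Real.exp (-z^2/2) / Real.sqrt (2*π)).toNNReal : ENNReal)) := rfl
  rw [hdd, integral_withDensity_eq_integral_smul hgc.measurable.real_toNNReal]
  have hsp : (0:ℝ) < Real.sqrt (2*π) := Real.sqrt_pos.mpr (by positivity)
  rw [div_eq_inv_mul, ← integral_const_mul]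
  congr 1
  funext z
  rw [NNReal.smul_def, Real.coe_toNNReal _ (hnn z), smul_eq_mul]
  ring

/-- The pushforwards of the uniform measures on the unit balls under the rescaled
first-coordinate maps converge weakly to the standard normal distribution:
for every bounded continuous `φ : ℝ → ℝ`, `∫ φ dμ_n → ∫ φ dN(0,1)`. -/
theorem rescaledCoordMeasure_tendsto_stdNormal (φ : BoundedContinuousFunction ℝ ℝ) :
    Tendsto (fun n : ℕ => ∫ z, φ z ∂(rescaledCoordMeasure n)) atTop
      (nhds (∫ z, φ z ∂stdNormal)) := by
  have hsp : (0:ℝ) < Real.sqrt (2*π) := Real.sqrt_pos.mpr (by positivity)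
  have hlim : Tendsto (fun n : ℕ => (∫ s, hdens n s * φ s) / (∫ s, hdens n s)) atTop
      (𝓝 ((∫ s, Real.exp (-s^2/2) * φ s) / Real.sqrt (2*π))) :=
    (tendsto_J φ).div tendsto_I hsp.ne'
  rw [stdNormal_int φ]
  apply Tendsto.congr' _ hlim
  filter_upwards [eventually_ge_atTop 1] with n hn
  have h1 := integral_rescaled n hn φ φ.continuous
  have h2 := Kc_mul n hn
  have hI : (∫ s, hdens n s) ≠ 0 := by
    intro h
    rw [h, mul_zero] at h2
    norm_num at h2
  have hK : Kc n = (∫ s, hdens n s)⁻¹ := by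
    field_simp at h2 ⊢
    linarith [h2]
  rw [div_eq_inv_mul, ← hK, ← h1]
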